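/- Let U be a compact topological space and X a real normed linear space. Let f ∈ C(U, X) be non-zero with M_f connected. Then for any g ∈ C(U, X), f ⊥_B g (i.e., ‖f + λg‖_U ≥ ‖f‖_U for all real λ) if and only if there exists u₀ ∈ M_f such that f(u₀) ⊥_B g(u₀). -/

import Mathlib

private lemma bj_lemA {X : Type*} [NormedAddCommGroup X] [NormedSpace ℝ X]
    (x y : X) {s : ℝ} (hs : 0 < s) (h : ‖x + s • y‖ ≤ ‖x‖) {t : ℝ} (ht : t ≤ 0) :
    ‖x‖ ≤ ‖x + t • y‖ := by
  rcases eq_or_lt_of_le ht with rfl | ht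
  · simp
  · have hst : 0 < s - t := by linarith
    set a := s / (s - t) with ha_def
    set b := (-t) / (s - t) with hb_def
    have ha : 0 < a := div_pos hs hst
    have hb : 0 < b := div_pos (by linarith) hst
    have hab : a + b = 1 := by
      rw [ha_def, hb_def, ← add_div, div_eq_one_iff_eq hst.ne']
      ring
    have hcomb : a * t + b * s = 0 := by
      field_simp [ha_def, hb_def]
      ring
    have key : a • (x + t • y) + b • (x + s • y) = x := by
      have : a • (x + t • y) + b • (x + s • y)
          = (a + b) • x + (a * t + b * s) • y := by
        simp only [smul_add, smul_smul, add_smul]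
        abel
      rw [this, hab, hcomb]; simp
    have h1 : ‖x‖ ≤ a * ‖x + t • y‖ + b * ‖x + s • y‖ := by
      calc ‖x‖ = ‖a • (x + t • y) + b • (x + s • y)‖ := by rw [key]
        _ ≤ ‖a • (x + t • y)‖ + ‖b • (x + s • y)‖ := norm_add_le _ _
        _ = a * ‖x + t • y‖ + b * ‖x + s • y‖ := by
            rw [norm_smul, norm_smul, Real.norm_eq_abs, Real.norm_eq_abs,
              abs_of_pos ha, abs_of_pos hb]
    have hb' : b * ‖x + s • y‖ ≤ b * ‖x‖ := mul_le_mul_of_nonneg_left h hb.le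
    have expand : a * ‖x‖ = ‖x‖ - b * ‖x‖ := by
      have : a = 1 - b := by linarith
      rw [this]; ring
    have h2 : a * ‖x‖ ≤ a * ‖x + t • y‖ := by linarith
    exact le_of_mul_le_mul_left h2 ha

private lemma bj_key {U : Type*} [TopologicalSpace U] [CompactSpace U] [Nonempty U]
    {X : Type*} [NormedAddCommGroup X] [NormedSpace ℝ X] (f g : C(U, X))
    (h : ∀ u : U, ‖f u‖ = ‖f‖ → ∃ t > (0:ℝ), ‖f u + t • g u‖ < ‖f‖) :
    ∃ t > (0:ℝ), ‖f + t • g‖ < ‖f‖ := by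
  have main : ∀ u : U, ∃ s > (0:ℝ), ∃ O : Set U, IsOpen O ∧ u ∈ O ∧
      ∀ t, 0 < t → t ≤ s → ∀ v ∈ O, ‖f v + t • g v‖ < ‖f‖ := by
    intro u
    by_cases hu : ‖f u‖ = ‖f‖
    · obtain ⟨s, hs, hlt⟩ := h u hu
      refine ⟨s, hs, {v | ‖f v + s • g v‖ < ‖f‖}, ?_, hlt, ?_⟩
      · exact isOpen_lt (f.continuous.add (g.continuous.const_smul s)).norm continuous_const
      · intro t ht hts v hv
        have hv' : ‖f v + s • g v‖ < ‖f‖ := hv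
        have hfv : ‖f v‖ ≤ ‖f‖ := f.norm_coe_le_norm v
        have hb : (t / s) * s = t := div_mul_cancel₀ t hs.ne'
        have hcomb : f v + t • g v = (1 - t / s) • f v + (t / s) • (f v + s • g v) := by
          have : (1 - t / s) • f v + (t / s) • (f v + s • g v)
              = ((1 - t / s) + t / s) • f v + ((t / s) * s) • g v := by
            simp only [smul_add, smul_smul, add_smul]
            abel
          rw [this, hb]; simp
        have hpos : 0 < t / s := div_pos ht hs
        have hle1 : t / s ≤ 1 := (div_le_one hs).mpr hts
        calc ‖f v + t • g v‖
            ≤ (1 - t / s) * ‖f v‖ + (t / s) * ‖f v + s • g v‖ := by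
              rw [hcomb]
              refine (norm_add_le _ _).trans ?_
              rw [norm_smul, norm_smul, Real.norm_eq_abs, Real.norm_eq_abs,
                abs_of_nonneg (by linarith), abs_of_nonneg hpos.le]
          _ < (1 - t / s) * ‖f‖ + (t / s) * ‖f‖ := by nlinarith
          _ = ‖f‖ := by ring
    · have hlt : ‖f u‖ < ‖f‖ := lt_of_le_of_ne (f.norm_coe_le_norm u) hu
      set c := (‖f u‖ + ‖f‖) / 2 with hc_def
      have hc1 : ‖f u‖ < c := by rw [hc_def]; linarith
      have hc2 : c < ‖f‖ := by rw [hc_def]; linarith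
      refine ⟨(‖f‖ - c) / (‖g‖ + 1), div_pos (by linarith) (by positivity),
        {v | ‖f v‖ < c}, isOpen_lt f.continuous.norm continuous_const, hc1, ?_⟩
      intro t ht hts v hv
      have hv' : ‖f v‖ < c := hv
      have hgv : ‖g v‖ ≤ ‖g‖ := g.norm_coe_le_norm v
      have hg1 : (0:ℝ) < ‖g‖ + 1 := by positivity
      have : ‖f v + t • g v‖ ≤ ‖f v‖ + t * ‖g v‖ := by
        refine (norm_add_le _ _).trans ?_
        rw [norm_smul, Real.norm_eq_abs, abs_of_pos ht]
      have ht' : t * ‖g v‖ < ‖f‖ - c := by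
        calc t * ‖g v‖ ≤ ((‖f‖ - c) / (‖g‖ + 1)) * ‖g v‖ := by
              exact mul_le_mul_of_nonneg_right hts (norm_nonneg _)
          _ < ‖f‖ - c := by
              rw [div_mul_eq_mul_div, div_lt_iff₀ hg1]
              nlinarith [norm_nonneg (g v)]
      linarith
  choose s hs O hO hmem hbound using main
  obtain ⟨I, hI⟩ := isCompact_univ.elim_finite_subcover O hO
    (fun v _ => Set.mem_iUnion.mpr ⟨v, hmem v⟩)
  have hIne : I.Nonempty := by
    obtain ⟨v⟩ := ‹Nonempty U›
    have := hI (Set.mem_univ v)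
    simp only [Set.mem_iUnion] at this
    obtain ⟨i, hi, _⟩ := this
    exact ⟨i, hi⟩
  set t₀ := I.inf' hIne s with ht₀_def
  have ht₀ : 0 < t₀ := by
    rw [ht₀_def, Finset.lt_inf'_iff]
    exact fun i hi => hs i
  have hpt : ∀ v : U, ‖f v + t₀ • g v‖ < ‖f‖ := by
    intro v
    have := hI (Set.mem_univ v)
    simp only [Set.mem_iUnion] at this
    obtain ⟨i, hi, hvi⟩ := this
    exact hbound i t₀ ht₀ (Finset.inf'_le s hi) v hvi
  obtain ⟨w, -, hmax⟩ := isCompact_univ.exists_isMaxOn Set.univ_nonempty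
    ((f.continuous.add (g.continuous.const_smul t₀)).norm.continuousOn)
  refine ⟨t₀, ht₀, ?_⟩
  have hle : ‖f + t₀ • g‖ ≤ ‖f w + t₀ • g w‖ := by
    rw [ContinuousMap.norm_le _ (norm_nonneg _)]
    intro v
    simpa using hmax (Set.mem_univ v)
  exact lt_of_le_of_lt hle (hpt w)

/-- **Theorem 2.2 (connectedcontinuity).** For a compact topological space `U`, a real
normed linear space `X`, and a non-zero `f ∈ C(U, X)` whose norm attainment set `M_f`
is connected: for any `g ∈ C(U, X)`, `f ⊥_B g` iff there exists `u₀ ∈ M_f` with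
`f u₀ ⊥_B g u₀`. -/
theorem birkhoff_orthogonality_continuousMap_of_connected
    {U : Type*} [TopologicalSpace U] [CompactSpace U]
    {X : Type*} [NormedAddCommGroup X] [NormedSpace ℝ X]
    (f : C(U, X)) (hf : f ≠ 0)
    (hconn : IsConnected {u : U | ‖f u‖ = ‖f‖})
    (g : C(U, X)) :
    (∀ t : ℝ, ‖f‖ ≤ ‖f + t • g‖) ↔
      ∃ u₀ : U, ‖f u₀‖ = ‖f‖ ∧ ∀ t : ℝ, ‖f u₀‖ ≤ ‖f u₀ + t • g u₀‖ := by
  have hUne : Nonempty U := ⟨hconn.nonempty.choose⟩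
  constructor
  · intro h
    set M := {u : U | ‖f u‖ = ‖f‖} with hM_def
    set P := ⋂ t ∈ Set.Ici (0:ℝ), {u : U | ‖f u‖ ≤ ‖f u + t • g u‖} with hP_def
    set N := ⋂ t ∈ Set.Iic (0:ℝ), {u : U | ‖f u‖ ≤ ‖f u + t • g u‖} with hN_def
    have hPc : IsClosed P :=
      isClosed_biInter fun t _ =>
        isClosed_le f.continuous.norm (f.continuous.add (g.continuous.const_smul t)).norm
    have hNc : IsClosed N :=
      isClosed_biInter fun t _ =>
        isClosed_le f.continuous.norm (f.continuous.add (g.continuous.const_smul t)).norm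
    have hmemP : ∀ u : U, u ∈ P ↔ ∀ t : ℝ, 0 ≤ t → ‖f u‖ ≤ ‖f u + t • g u‖ := by
      intro u; simp [hP_def]
    have hmemN : ∀ u : U, u ∈ N ↔ ∀ t : ℝ, t ≤ 0 → ‖f u‖ ≤ ‖f u + t • g u‖ := by
      intro u; simp [hN_def]
    have hcover : M ⊆ P ∪ N := by
      intro u hu
      by_cases hP : u ∈ P
      · exact Or.inl hP
      · refine Or.inr ?_
        rw [hmemP] at hP
        push_neg at hP
        obtain ⟨t, ht0, hlt⟩ := hP
        have ht : 0 < t := by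
          rcases eq_or_lt_of_le ht0 with rfl | h'
          · simp at hlt
          · exact h'
        rw [hmemN]
        exact fun t' ht' => bj_lemA (f u) (g u) ht hlt.le ht'
    have hPM : (M ∩ P).Nonempty := by
      by_contra hempty
      rw [Set.not_nonempty_iff_eq_empty] at hempty
      have : ∀ u : U, ‖f u‖ = ‖f‖ → ∃ t > (0:ℝ), ‖f u + t • g u‖ < ‖f‖ := by
        intro u hu
        have hnP : u ∉ P := fun hP =>
          Set.eq_empty_iff_forall_notMem.mp hempty u ⟨hu, hP⟩
        rw [hmemP] at hnP
        push_neg at hnP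
        obtain ⟨t, ht0, hlt⟩ := hnP
        have ht : 0 < t := by
          rcases eq_or_lt_of_le ht0 with rfl | h'
          · simp at hlt
          · exact h'
        exact ⟨t, ht, by rw [← hu]; exact hlt⟩
      obtain ⟨t, ht, hlt⟩ := bj_key f g this
      exact absurd (h t) (not_le.mpr hlt)
    have hNM : (M ∩ N).Nonempty := by
      by_contra hempty
      rw [Set.not_nonempty_iff_eq_empty] at hempty
      have : ∀ u : U, ‖f u‖ = ‖f‖ → ∃ t > (0:ℝ), ‖f u + t • (-g) u‖ < ‖f‖ := by
        intro u hu
        have hnN : u ∉ N := fun hN =>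
          Set.eq_empty_iff_forall_notMem.mp hempty u ⟨hu, hN⟩
        rw [hmemN] at hnN
        push_neg at hnN
        obtain ⟨t, ht0, hlt⟩ := hnN
        have ht : t < 0 := by
          rcases eq_or_lt_of_le ht0 with rfl | h'
          · simp at hlt
          · exact h'
        refine ⟨-t, by linarith, ?_⟩
        have : f u + (-t) • (-g) u = f u + t • g u := by
          simp [smul_smul]
        rw [this, ← hu]
        exact hlt
      obtain ⟨t, ht, hlt⟩ := bj_key f (-g) this
      have heq : f + t • (-g) = f + (-t) • g := by
        ext u; simp
      rw [heq] at hlt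
      exact absurd (h (-t)) (not_le.mpr hlt)
    have hM_isPre : IsPreconnected M := hconn.isPreconnected
    obtain ⟨u₀, hu₀M, hu₀P, hu₀N⟩ :=
      (isPreconnected_closed_iff.mp hM_isPre) P N hPc hNc hcover hPM hNM
    refine ⟨u₀, hu₀M, fun t => ?_⟩
    rcases le_or_gt 0 t with ht | ht
    · exact (hmemP u₀).mp hu₀P t ht
    · exact (hmemN u₀).mp hu₀N t ht.le
  · rintro ⟨u₀, hu₀, horth⟩ t
    calc ‖f‖ = ‖f u₀‖ := hu₀.symm
      _ ≤ ‖f u₀ + t • g u₀‖ := horth t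
      _ = ‖(f + t • g) u₀‖ := by simp
      _ ≤ ‖f + t • g‖ := (f + t • g).norm_coe_le_norm u₀
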